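/- Let η : ℝ → ℝ be defined for 0 < r < π/2 by η(r) = c₁ · (1 − cos(r)^(2/3))^(1/2) · (cos(r)^(2/3) + cos(r)^(4/3) + 1)^(−1/4) · exp(−(√3/2) · arctan((2·cos(r)^(2/3) + 1)/√3)), where c₁ = 3^(3/4) · e^(π/(2√3)). Then η is differentiable at every r ∈ (0, π/2), with derivative η'(r) = η(r)/(sin(r) · cos(r)^(1/3)); in particular η'(r)³ · sin(r)³ · cos(r) = η(r)³ for all r ∈ (0, π/2). -/

import Mathlib

/-- The constant `c₁ = 3^(3/4) e^(π/(2√3))` of Lemma 2.4 of Gilkey–Park. -/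
noncomputable def c₁ : ℝ := (3 : ℝ) ^ ((3 : ℝ) / 4) * Real.exp (Real.pi / (2 * Real.sqrt 3))

/-- The reparametrized radial distance function `η` of Lemma 2.4 of Gilkey–Park on `CP²`. -/
noncomputable def η (r : ℝ) : ℝ :=
  c₁ * (1 - Real.cos r ^ ((2 : ℝ) / 3)) ^ ((1 : ℝ) / 2)
    * (Real.cos r ^ ((2 : ℝ) / 3) + Real.cos r ^ ((4 : ℝ) / 3) + 1) ^ (-(1 : ℝ) / 4)
    * Real.exp (-(Real.sqrt 3 / 2)
        * Real.arctan ((2 * Real.cos r ^ ((2 : ℝ) / 3) + 1) / Real.sqrt 3))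

/-- On `(0, π/2)`, `η` is differentiable with `η' = η/(sin r · cos(r)^(1/3))`; in particular
`η'³ sin³(r) cos(r) = η³`, the ODE `1 = η'³ η^(−3) sin³(r) cos(r)` of Lemma 2.4. -/
theorem stmt_8 :
    ∀ r ∈ Set.Ioo (0 : ℝ) (Real.pi / 2),
      HasDerivAt η (η r / (Real.sin r * Real.cos r ^ ((1 : ℝ) / 3))) r ∧
      (deriv η r) ^ 3 * (Real.sin r) ^ 3 * Real.cos r = (η r) ^ 3 := by
  intro r hrr
  obtain ⟨hr0, hrp⟩ := hrr
  have key : HasDerivAt η (η r / (Real.sin r * Real.cos r ^ ((1 : ℝ) / 3))) r := by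
    have hpi := Real.pi_pos
    have hs : 0 < Real.sin r := Real.sin_pos_of_pos_of_lt_pi hr0 (by linarith)
    have hc : 0 < Real.cos r := Real.cos_pos_of_mem_Ioo ⟨by linarith, hrp⟩
    have hc1 : Real.cos r < 1 := by
      have := Real.cos_lt_cos_of_nonneg_of_le_pi (le_refl 0) (by linarith) hr0
      simpa using this
    set c := Real.cos r with hcdef
    set s := Real.sin r with hsdef
    have hu1 : c ^ ((2:ℝ)/3) < 1 := Real.rpow_lt_one hc.le hc1 (by norm_num)
    have hupos : (0:ℝ) < c ^ ((2:ℝ)/3) := Real.rpow_pos_of_pos hc _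
    have h1u : (0:ℝ) < 1 - c ^ ((2:ℝ)/3) := by linarith
    have hgpos : (0:ℝ) < c ^ ((2:ℝ)/3) + c ^ ((4:ℝ)/3) + 1 := by positivity
    have hcos : HasDerivAt Real.cos (-s) r := Real.hasDerivAt_cos r
    have hu : HasDerivAt (fun x => Real.cos x ^ ((2:ℝ)/3)) ((-s) * ((2:ℝ)/3) * c ^ ((2:ℝ)/3 - 1)) r :=
      hcos.rpow_const (Or.inl hc.ne')
    have hv : HasDerivAt (fun x => Real.cos x ^ ((4:ℝ)/3)) ((-s) * ((4:ℝ)/3) * c ^ ((4:ℝ)/3 - 1)) r :=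
      hcos.rpow_const (Or.inl hc.ne')
    have hA : HasDerivAt (fun x => (1 - Real.cos x ^ ((2:ℝ)/3)) ^ ((1:ℝ)/2))
        ((-((-s) * ((2:ℝ)/3) * c ^ ((2:ℝ)/3 - 1))) * ((1:ℝ)/2) * (1 - c ^ ((2:ℝ)/3)) ^ ((1:ℝ)/2 - 1)) r :=
      (hu.const_sub 1).rpow_const (Or.inl h1u.ne')
    have hg : HasDerivAt (fun x => Real.cos x ^ ((2:ℝ)/3) + Real.cos x ^ ((4:ℝ)/3) + 1)
        ((-s) * ((2:ℝ)/3) * c ^ ((2:ℝ)/3 - 1) + (-s) * ((4:ℝ)/3) * c ^ ((4:ℝ)/3 - 1)) r :=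
      (hu.add hv).add_const 1
    have hB := hg.rpow_const (p := -(1:ℝ)/4) (Or.inl hgpos.ne')
    have hw : HasDerivAt (fun x => (2 * Real.cos x ^ ((2:ℝ)/3) + 1) / Real.sqrt 3)
        ((2 * ((-s) * ((2:ℝ)/3) * c ^ ((2:ℝ)/3 - 1))) / Real.sqrt 3) r :=
      ((hu.const_mul 2).add_const 1).div_const _
    have hC := ((hw.arctan).const_mul (-(Real.sqrt 3 / 2))).exp
    have hbig := ((hA.const_mul c₁).mul hB).mul hC
    convert hbig using 1
    · rfl
    · rfl
    · rfl
    have hsq3 : Real.sqrt 3 ^ 2 = 3 := Real.sq_sqrt (by norm_num)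
    have ht0 : (0:ℝ) < c ^ ((1:ℝ)/3) := Real.rpow_pos_of_pos hc _
    have e1 : c ^ ((2:ℝ)/3 - 1) = (c^((1:ℝ)/3))^2 / (c^((1:ℝ)/3))^3 := by
      rw [← Real.rpow_natCast (c^((1:ℝ)/3)) 2, ← Real.rpow_natCast (c^((1:ℝ)/3)) 3,
        ← Real.rpow_mul hc.le, ← Real.rpow_mul hc.le, ← Real.rpow_sub hc]
      norm_num
    have e2 : c ^ ((4:ℝ)/3 - 1) = (c^((1:ℝ)/3))^4 / (c^((1:ℝ)/3))^3 := by
      rw [← Real.rpow_natCast (c^((1:ℝ)/3)) 4, ← Real.rpow_natCast (c^((1:ℝ)/3)) 3,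
        ← Real.rpow_mul hc.le, ← Real.rpow_mul hc.le, ← Real.rpow_sub hc]
      norm_num
    have h2 : c ^ ((2:ℝ)/3) = (c^((1:ℝ)/3))^2 := by
      rw [← Real.rpow_natCast (c^((1:ℝ)/3)) 2, ← Real.rpow_mul hc.le]; norm_num
    have h4 : c ^ ((4:ℝ)/3) = (c^((1:ℝ)/3))^4 := by
      rw [← Real.rpow_natCast (c^((1:ℝ)/3)) 4, ← Real.rpow_mul hc.le]; norm_num
    have ht3 : (c^((1:ℝ)/3))^3 = c := by
      rw [← Real.rpow_natCast (c^((1:ℝ)/3)) 3, ← Real.rpow_mul hc.le]; norm_num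
    have hA1 : (1 - c ^ ((2:ℝ)/3)) ^ ((1:ℝ)/2 - 1) = (1 - c ^ ((2:ℝ)/3)) ^ ((1:ℝ)/2) / (1 - c ^ ((2:ℝ)/3)) := by
      rw [Real.rpow_sub h1u, Real.rpow_one]
    have hg1 : (c ^ ((2:ℝ)/3) + c ^ ((4:ℝ)/3) + 1) ^ (-(1:ℝ)/4 - 1)
        = (c ^ ((2:ℝ)/3) + c ^ ((4:ℝ)/3) + 1) ^ (-(1:ℝ)/4) / (c ^ ((2:ℝ)/3) + c ^ ((4:ℝ)/3) + 1) := by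
      rw [Real.rpow_sub hgpos, Real.rpow_one]
    have hst : s^2 = 1 - c^2 := by
      have := Real.sin_sq_add_cos_sq r; rw [← hcdef, ← hsdef] at this; linarith
    simp only [η, Pi.mul_apply, ← hcdef]
    rw [hA1, hg1, e1, e2, h2, h4, div_pow, hsq3]
    set x := c ^ ((1:ℝ)/3) with hxdef
    have hst' : s^2 = 1 - x^6 := by rw [hst, ← ht3]; ring
    have hx2 : (0:ℝ) < 1 - x^2 := by rw [← h2]; exact h1u
    have ha : (0:ℝ) < (1 - x^2) ^ ((1:ℝ)/2) := Real.rpow_pos_of_pos hx2 _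
    have hx1 : (1:ℝ) - x^2 ≠ 0 := hx2.ne'
    have hg' : x^2 + x^4 + 1 ≠ 0 := by positivity
    have hs3 : Real.sqrt 3 ≠ 0 := by positivity
    generalize (1 - x ^ 2) ^ ((1:ℝ) / 2) = A at *
    generalize (x ^ 2 + x ^ 4 + 1) ^ (-(1:ℝ) / 4) = B at *
    generalize Real.exp (-(√3 / 2) * Real.arctan ((2 * x ^ 2 + 1) / √3)) = E at *
    field_simp
    rw [hst']
    ring
  refine ⟨key, ?_⟩
  rw [key.deriv]
  have hpi := Real.pi_pos
  have hs : 0 < Real.sin r := Real.sin_pos_of_pos_of_lt_pi hr0 (by linarith)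
  have hc : 0 < Real.cos r := Real.cos_pos_of_mem_Ioo ⟨by linarith, hrp⟩
  have ht3 : (Real.cos r ^ ((1:ℝ)/3)) ^ (3:ℕ) = Real.cos r := by
    rw [← Real.rpow_natCast (Real.cos r ^ ((1:ℝ)/3)) 3, ← Real.rpow_mul hc.le]; norm_num
  have h3 : (Real.sin r * Real.cos r ^ ((1:ℝ)/3)) ^ (3:ℕ) = Real.sin r ^ 3 * Real.cos r := by
    rw [mul_pow, ht3]
  have ht0 : (0:ℝ) < Real.cos r ^ ((1:ℝ)/3) := Real.rpow_pos_of_pos hc _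
  rw [div_pow, h3]
  field_simp
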